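/- The theta function of the Construction A lattice equals the complete weight enumerator evaluated at theta functions: for a linear code C ⊆ F_p^n (p prime), Σ_{λ ∈ Λ(C)} q^{λ²/2} = W_C({θ_a(τ)}), where θ_a(τ) = Σ_{k ∈ ℤ} q^{(p/2)(k + a/p)²}. -/
import Mathlib


open scoped BigOperators

/-- Construction A lattice of a code `C ⊆ 𝔽_p^n`. -/
noncomputable def constructionA (p n : ℕ) (C : Set (Fin n → ZMod p)) : Set (Fin n → ℝ) :=
  {x | ∃ v : Fin n → ℤ, (∀ i, x i = (v i : ℝ) / Real.sqrt p) ∧ (fun i => ((v i : ZMod p))) ∈ C}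

/-- `wt_a(c) = |{ i : c_i = a }|`. -/
def wtA {p n : ℕ} (a : ZMod p) (c : Fin n → ZMod p) : ℕ :=
  (Finset.univ.filter fun i => c i = a).card

open Classical in
/-- Complete weight enumerator `W_C({x_a}) = Σ_{c ∈ C} Π_a x_a^{wt_a(c)}`. -/
noncomputable def cwe (p n : ℕ) [NeZero p] (C : Set (Fin n → ZMod p)) (x : ZMod p → ℂ) : ℂ :=
  ∑ c ∈ Finset.univ.filter (fun c => c ∈ C), ∏ a : ZMod p, x a ^ wtA a c

/-- `θ_a(τ) = Σ_{k ∈ ℤ} q^{(p/2)(k + a/p)²}` with `q = e^{2πiτ}`. -/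
noncomputable def thetaA (p : ℕ) (a : ℕ) (τ : ℂ) : ℂ :=
  ∑' k : ℤ, Complex.exp (2 * Real.pi * Complex.I * τ * ((p : ℂ) / 2) *
    ((k : ℂ) + (a : ℂ) / (p : ℂ)) ^ 2)

/-! ### Auxiliary definitions and lemmas -/

/-- The individual term in the theta series: `q^{(a+pk)²/(2p)}`. -/
noncomputable def gterm (p : ℕ) (τ : ℂ) (a : ℂ) (k : ℤ) : ℂ :=
  Complex.exp (2 * Real.pi * Complex.I * τ * (((a : ℂ) + p * k) ^ 2 / (2 * p)))

lemma gterm_eq (p : ℕ) (hp : p ≠ 0) (τ a : ℂ) (k : ℤ) :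
    gterm p τ a k = Complex.exp (Real.pi * Complex.I * a ^ 2 * τ / p) *
      jacobiTheta₂_term k (a * τ) (p * τ) := by
  rw [gterm, jacobiTheta₂_term, ← Complex.exp_add]
  congr 1
  have : (p : ℂ) ≠ 0 := Nat.cast_ne_zero.mpr hp
  field_simp
  ring

lemma summable_gterm (p : ℕ) (hp : p ≠ 0) (τ a : ℂ) (hτ : 0 < τ.im) :
    Summable (fun k : ℤ => ‖gterm p τ a k‖) := by
  have h : Summable (jacobiTheta₂_term · (a * τ) (p * τ)) := by
    rw [summable_jacobiTheta₂_term_iff]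
    simp only [Complex.mul_im, Complex.natCast_re, Complex.natCast_im, zero_mul, add_zero]
    have hp' : 0 < (p : ℝ) := by exact_mod_cast Nat.pos_of_ne_zero hp
    positivity
  have := (summable_norm_iff.mpr (h.mul_left (Complex.exp (Real.pi * Complex.I * a ^ 2 * τ / p))))
  apply this.congr
  intro k
  rw [gterm_eq p hp]

lemma thetaA_eq_tsum_gterm (p : ℕ) (hp : p ≠ 0) (a : ℕ) (τ : ℂ) :
    thetaA p a τ = ∑' k : ℤ, gterm p τ (a : ℂ) k := by
  unfold thetaA gterm
  apply tsum_congr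
  intro k
  congr 1
  have hpC : (p : ℂ) ≠ 0 := Nat.cast_ne_zero.mpr hp
  field_simp
  ring

lemma prod_cons_eq (n : ℕ) (f : Fin (n+1) → ℤ → ℂ) (x : ℤ × (Fin n → ℤ)) :
    ∏ i, f i (Fin.cons (α := fun _ => ℤ) x.1 x.2 i) = f 0 x.1 * ∏ i : Fin n, f i.succ (x.2 i) := by
  rw [Fin.prod_univ_succ]
  simp

lemma summable_norm_pi_prod : ∀ (n : ℕ) (f : Fin n → ℤ → ℂ),
    (∀ i, Summable fun k => ‖f i k‖) →
    Summable (fun m : Fin n → ℤ => ‖∏ i, f i (m i)‖) := by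
  intro n
  induction n with
  | zero => exact fun f h => Summable.of_finite
  | succ n ih =>
    intro f h
    have hg := ih (fun i => f i.succ) (fun i => h i.succ)
    have h0 := h 0
    have key := summable_mul_of_summable_norm (R := ℂ) h0 hg
    have key2 := summable_norm_iff.mpr key
    rw [← (Fin.consEquiv (fun _ => ℤ)).summable_iff]
    apply key2.congr
    intro x
    congr 1
    exact (prod_cons_eq n f x).symm

lemma tsum_pi_prod : ∀ (n : ℕ) (f : Fin n → ℤ → ℂ),
    (∀ i, Summable fun k => ‖f i k‖) →
    (∑' m : Fin n → ℤ, ∏ i, f i (m i)) = ∏ i, ∑' k, f i k := by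
  intro n
  induction n with
  | zero => intro f h; simp
  | succ n ih =>
    intro f h
    have hg := summable_norm_pi_prod n (fun i => f i.succ) (fun i => h i.succ)
    have h0 := h 0
    have hts := tsum_mul_tsum_of_summable_norm (R := ℂ) h0 hg
    have hih := ih (fun i => f i.succ) (fun i => h i.succ)
    rw [← (Fin.consEquiv (fun _ => ℤ)).tsum_eq]
    calc (∑' x : ℤ × (Fin n → ℤ), ∏ i, f i (Fin.consEquiv (fun _ => ℤ) x i))
        = ∑' x : ℤ × (Fin n → ℤ), f 0 x.1 * ∏ i : Fin n, f i.succ (x.2 i) :=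
          tsum_congr fun x => prod_cons_eq n f x
      _ = (∑' k, f 0 k) * ∑' m : Fin n → ℤ, ∏ i : Fin n, f i.succ (m i) := hts.symm
      _ = ∏ i, ∑' k, f i k := by rw [hih, Fin.prod_univ_succ]

lemma castkey (p : ℕ) [NeZero p] (a : ZMod p) (k : ℤ) :
    (((a.val : ℤ) + p * k : ℤ) : ZMod p) = a := by
  push_cast
  simp [ZMod.natCast_val, ZMod.cast_id]

lemma dvdkey (p : ℕ) [NeZero p] (v : ℤ) :
    (p : ℤ) ∣ v - ((v : ZMod p).val : ℤ) := by
  have : ((v - ((v : ZMod p).val : ℤ) : ℤ) : ZMod p) = 0 := by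
    push_cast
    simp [ZMod.natCast_val, ZMod.cast_id]
  exact (ZMod.intCast_zmod_eq_zero_iff_dvd _ p).mp this

/-- Decomposition of an integer vector reducing into the code as codeword plus `p`
times an integer vector. -/
def codeEquiv (p n : ℕ) [NeZero p] (C : Set (Fin n → ZMod p)) :
    ({c : Fin n → ZMod p // c ∈ C} × (Fin n → ℤ)) ≃
      {v : Fin n → ℤ // (fun i => ((v i : ZMod p))) ∈ C} where
  toFun x := ⟨fun i => ((x.1.1 i).val : ℤ) + p * x.2 i, by
    have h : (fun i => ((((x.1.1 i).val : ℤ) + p * x.2 i : ℤ) : ZMod p)) = x.1.1 := by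
      funext i; exact castkey p _ _
    rw [h]; exact x.1.2⟩
  invFun v := (⟨fun i => ((v.1 i : ZMod p)), v.2⟩,
    fun i => (v.1 i - ((v.1 i : ZMod p).val : ℤ)) / p)
  left_inv x := by
    have hp : (p : ℤ) ≠ 0 := by exact_mod_cast (NeZero.ne p)
    ext i
    · exact congrFun (funext fun i => castkey p (x.1.1 i) (x.2 i)) i ▸ rfl
    · simp only
      rw [castkey p (x.1.1 i) (x.2 i)]
      rw [add_sub_cancel_left, Int.mul_ediv_cancel_left _ hp]
  right_inv v := by
    apply Subtype.ext
    funext i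
    simp only
    rw [Int.mul_ediv_cancel' (dvdkey p (v.1 i))]
    ring

lemma prod_comp_eq_prod_pow {p n : ℕ} (c : Fin n → ZMod p) [NeZero p] (g : ZMod p → ℂ) :
    ∏ i, g (c i) = ∏ a : ZMod p, g a ^ wtA a c := by
  classical
  rw [← Finset.prod_fiberwise' Finset.univ c g]
  apply Finset.prod_congr rfl
  intro a _
  rw [Finset.prod_const, wtA]

/-- The theta function of the Construction A lattice equals the complete weight
enumerator evaluated at the theta functions `θ_a`:
`Σ_{λ ∈ Λ(C)} q^{λ²/2} = W_C({θ_a(τ)})`. -/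
theorem constructionA_theta (p n : ℕ) [Fact p.Prime]
    (C : Submodule (ZMod p) (Fin n → ZMod p)) (τ : ℂ) (hτ : 0 < τ.im) :
    (∑' x : constructionA p n (C : Set (Fin n → ZMod p)),
        Complex.exp (2 * Real.pi * Complex.I * τ *
          ((∑ i, (x : Fin n → ℝ) i ^ 2 : ℝ) : ℂ) / 2)) =
      cwe p n (C : Set (Fin n → ZMod p)) (fun a => thetaA p a.val τ) := by
  classical
  have hp : p ≠ 0 := (Fact.out (p := p.Prime)).ne_zero
  haveI : NeZero p := ⟨hp⟩
  have hpR : (0 : ℝ) < p := by exact_mod_cast Nat.pos_of_ne_zero hp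
  have hpC : (p : ℂ) ≠ 0 := Nat.cast_ne_zero.mpr hp
  have hsp : Real.sqrt p ≠ 0 := by positivity
  set S : Set (Fin n → ZMod p) := (C : Set (Fin n → ZMod p)) with hS
  -- Step 1 : reindex the lattice sum by integer vectors reducing into the code
  let e1 : {v : Fin n → ℤ // (fun i => ((v i : ZMod p))) ∈ S} → constructionA p n S :=
    fun v => ⟨fun i => (v.1 i : ℝ) / Real.sqrt p, ⟨v.1, fun i => rfl, v.2⟩⟩
  have he1 : Function.Bijective e1 := by
    constructor
    · intro v w h
      apply Subtype.ext; funext i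
      have h2 : (v.1 i : ℝ) / Real.sqrt p = (w.1 i : ℝ) / Real.sqrt p :=
        congrFun (congrArg Subtype.val h) i
      field_simp [hsp] at h2
      exact_mod_cast h2
    · rintro ⟨x, hx⟩
      obtain ⟨v, h1, h2⟩ := hx
      refine ⟨⟨v, h2⟩, ?_⟩
      apply Subtype.ext; funext i
      exact (h1 i).symm
  let E1 := Equiv.ofBijective e1 he1
  rw [← E1.tsum_eq]
  -- rewrite the summand as a product of gterms over coordinates
  have hsummand : ∀ v : {v : Fin n → ℤ // (fun i => ((v i : ZMod p))) ∈ S},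
      Complex.exp (2 * Real.pi * Complex.I * τ *
        ((∑ i, ((E1 v : Fin n → ℝ) i) ^ 2 : ℝ) : ℂ) / 2) =
      ∏ i, Complex.exp (2 * Real.pi * Complex.I * τ * ((v.1 i : ℂ) ^ 2 / (2 * p))) := by
    intro v
    rw [← Complex.exp_sum]
    congr 1
    have hsq : ∀ i, ((E1 v : Fin n → ℝ) i) ^ 2 = (v.1 i : ℝ) ^ 2 / p := by
      intro i
      show ((v.1 i : ℝ) / Real.sqrt p) ^ 2 = (v.1 i : ℝ) ^ 2 / p
      rw [div_pow, Real.sq_sqrt hpR.le]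
    rw [Finset.sum_congr rfl (fun i _ => hsq i)]
    push_cast
    rw [Finset.mul_sum, Finset.sum_div]
    apply Finset.sum_congr rfl
    intro i _
    ring
  have key : ∀ x : {c : Fin n → ZMod p // c ∈ S} × (Fin n → ℤ),
      ((codeEquiv p n S x).1 : Fin n → ℤ) = fun i => ((x.1.1 i).val : ℤ) + p * x.2 i := fun x => rfl
  have hsummand2 : ∀ x : {c : Fin n → ZMod p // c ∈ S} × (Fin n → ℤ),
      (∏ i, Complex.exp (2 * Real.pi * Complex.I * τ *
        (((codeEquiv p n S x).1 i : ℂ) ^ 2 / (2 * p)))) =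
      ∏ i, gterm p τ ((x.1.1 i).val : ℂ) (x.2 i) := by
    intro x
    apply Finset.prod_congr rfl
    intro i _
    rw [key x, gterm]
    congr 2
    push_cast
    ring
  -- summability over the product index
  have hnormc : ∀ c : {c : Fin n → ZMod p // c ∈ S},
      Summable (fun m : Fin n → ℤ => ‖∏ i, gterm p τ (((c.1 i).val : ℕ) : ℂ) (m i)‖) :=
    fun c => summable_norm_pi_prod n _ (fun i => summable_gterm p hp τ _ hτ)
  haveI : Fintype {c : Fin n → ZMod p // c ∈ S} := Fintype.ofFinite _
  have hsum : Summable (fun x : {c : Fin n → ZMod p // c ∈ S} × (Fin n → ℤ) =>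
      ∏ i, gterm p τ (((x.1.1 i).val : ℕ) : ℂ) (x.2 i)) := by
    apply Summable.of_norm
    rw [show (fun x : {c : Fin n → ZMod p // c ∈ S} × (Fin n → ℤ) =>
        ‖∏ i, gterm p τ (((x.1.1 i).val : ℕ) : ℂ) (x.2 i)‖) =
        fun x => ‖∏ i, gterm p τ (((x.1.1 i).val : ℕ) : ℂ) (x.2 i)‖ from rfl]
    exact (summable_prod_of_nonneg (fun _ => norm_nonneg _)).mpr
      ⟨fun c => hnormc c, Summable.of_finite⟩
  -- evaluate the inner sums
  have hinner : ∀ c : {c : Fin n → ZMod p // c ∈ S},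
      (∑' m : Fin n → ℤ, ∏ i, gterm p τ (((c.1 i).val : ℕ) : ℂ) (m i)) =
      ∏ a : ZMod p, thetaA p a.val τ ^ wtA a c.1 := by
    intro c
    rw [tsum_pi_prod n _ (fun i => summable_gterm p hp τ _ hτ)]
    rw [show (∏ i, ∑' k, gterm p τ (((c.1 i).val : ℕ) : ℂ) k) =
        ∏ i, thetaA p ((c.1 i).val) τ from
      Finset.prod_congr rfl fun i _ => (thetaA_eq_tsum_gterm p hp _ τ).symm]
    exact prod_comp_eq_prod_pow c.1 (fun a => thetaA p a.val τ)
  rw [tsum_congr hsummand]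
  rw [← (codeEquiv p n S).tsum_eq]
  calc (∑' x : {c : Fin n → ZMod p // c ∈ S} × (Fin n → ℤ),
        ∏ i, Complex.exp (2 * Real.pi * Complex.I * τ *
          (((codeEquiv p n S x).1 i : ℂ) ^ 2 / (2 * p))))
      = ∑' x : {c : Fin n → ZMod p // c ∈ S} × (Fin n → ℤ),
          ∏ i, gterm p τ (((x.1.1 i).val : ℕ) : ℂ) (x.2 i) := tsum_congr hsummand2
    _ = ∑' c : {c : Fin n → ZMod p // c ∈ S}, ∑' m : Fin n → ℤ,
          ∏ i, gterm p τ (((c.1 i).val : ℕ) : ℂ) (m i) := Summable.tsum_prod hsum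
    _ = ∑' c : {c : Fin n → ZMod p // c ∈ S},
          ∏ a : ZMod p, thetaA p a.val τ ^ wtA a c.1 := tsum_congr hinner
    _ = ∑ c : {c : Fin n → ZMod p // c ∈ S},
          ∏ a : ZMod p, thetaA p a.val τ ^ wtA a c.1 := tsum_fintype _
    _ = cwe p n S (fun a => thetaA p a.val τ) := by
        rw [cwe.eq_def]
        refine (Finset.sum_subtype (Finset.univ.filter (fun c => c ∈ S)) ?_
          (fun c => ∏ a : ZMod p, thetaA p a.val τ ^ wtA a c)).symm
        intro x
        simp
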